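/- Let P be an n×n positive definite matrix, A_x ∈ ℝ^{1×n} a row vector, b ∈ ℝ, x̄ ∈ ℝⁿ, δ ≥ 0. Then (∀ x, ‖x - x̄‖_P ≤ δ → A_x x ≤ b) if and only if A_x x̄ + ‖(A_x P^{-1/2})ᵀ‖ δ ≤ b. -/

import Mathlib

open scoped Matrix.Norms.L2Operator
open Matrix

/-- The positive semidefinite square root of a positive semidefinite matrix
(the definition `Matrix.PosSemidef.sqrt` of the older Mathlib, removed since). -/
noncomputable def Matrix.PosSemidef.sqrt {n : Type*} [Fintype n] [DecidableEq n]
    {A : Matrix n n ℝ} (hA : A.PosSemidef) : Matrix n n ℝ :=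
  hA.1.eigenvectorUnitary.1 * diagonal ((↑) ∘ (Real.sqrt ·) ∘ hA.1.eigenvalues) *
    (star hA.1.eigenvectorUnitary : Matrix n n ℝ)

noncomputable def eNorm {n : ℕ} (x : Fin n → ℝ) : ℝ := Real.sqrt (x ⬝ᵥ x)

noncomputable def pNorm {n : ℕ} (P : Matrix (Fin n) (Fin n) ℝ) (x : Fin n → ℝ) : ℝ :=
  Real.sqrt (x ⬝ᵥ P *ᵥ x)

lemma eNorm_nonneg {n : ℕ} (x : Fin n → ℝ) : 0 ≤ eNorm x := Real.sqrt_nonneg _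

lemma dot_self_nonneg {n : ℕ} (x : Fin n → ℝ) : 0 ≤ x ⬝ᵥ x :=
  Finset.sum_nonneg fun _ _ => mul_self_nonneg _

lemma eNorm_mul_self {n : ℕ} (x : Fin n → ℝ) : eNorm x * eNorm x = x ⬝ᵥ x :=
  Real.mul_self_sqrt (dot_self_nonneg x)

lemma cauchy_schwarz {n : ℕ} (x y : Fin n → ℝ) : x ⬝ᵥ y ≤ eNorm x * eNorm y := by
  unfold eNorm dotProduct
  calc ∑ i, x i * y i ≤ Real.sqrt (∑ i, x i ^ 2) * Real.sqrt (∑ i, y i ^ 2) :=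
        Real.sum_mul_le_sqrt_mul_sqrt _ _ _
    _ = Real.sqrt (∑ i, x i * x i) * Real.sqrt (∑ i, y i * y i) := by
        simp [sq]

theorem stmt_7 {n : ℕ} (P : Matrix (Fin n) (Fin n) ℝ) (hP : P.PosDef)
    (Ax : Fin n → ℝ) (b : ℝ) (xb : Fin n → ℝ) (δ : ℝ) (hδ : 0 ≤ δ) :
    (∀ x : Fin n → ℝ, pNorm P (x - xb) ≤ δ → Ax ⬝ᵥ x ≤ b) ↔
      Ax ⬝ᵥ xb + eNorm (Ax ᵥ* (hP.posSemidef.sqrt)⁻¹) * δ ≤ b := by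
  set S := hP.posSemidef.sqrt with hSdef
  have hSherm : Sᵀ = S := by
    rw [hSdef, Matrix.PosSemidef.sqrt]
    simp [Matrix.transpose_mul, Matrix.star_eq_conjTranspose, Matrix.mul_assoc]
  have hSS : S * S = P := by
    have hU := Unitary.coe_star_mul_self hP.posSemidef.1.eigenvectorUnitary
    conv_rhs => rw [hP.posSemidef.1.spectral_theorem, Unitary.conjStarAlgAut_apply]
    rw [hSdef, Matrix.PosSemidef.sqrt]
    simp only [Matrix.mul_assoc]
    rw [← Matrix.mul_assoc (star _ : Matrix _ _ ℝ) (_ : Matrix _ _ ℝ), hU, Matrix.one_mul,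
      ← Matrix.mul_assoc (diagonal _), diagonal_mul_diagonal]
    congr 3
    funext i
    simp [Real.mul_self_sqrt (hP.posSemidef.eigenvalues_nonneg i)]
  have hdet : IsUnit S.det := by
    have h1 : S.det * S.det = P.det := by rw [← det_mul, hSS]
    have h2 : (0:ℝ) < P.det := hP.det_pos
    exact isUnit_iff_ne_zero.2 fun h => by rw [h, zero_mul] at h1; linarith
  have hinvS : S⁻¹ * S = 1 := nonsing_inv_mul S hdet
  have hSinv : S * S⁻¹ = 1 := mul_nonsing_inv S hdet
  set c := Ax ᵥ* S⁻¹ with hcdef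
  -- pNorm P v = eNorm (S *ᵥ v)
  have hpnorm : ∀ v : Fin n → ℝ, pNorm P v = eNorm (S *ᵥ v) := by
    intro v
    unfold pNorm eNorm
    congr 1
    calc v ⬝ᵥ P *ᵥ v = v ⬝ᵥ (S * S) *ᵥ v := by rw [hSS]
      _ = v ⬝ᵥ S *ᵥ (S *ᵥ v) := by rw [← mulVec_mulVec]
      _ = (v ᵥ* S) ⬝ᵥ (S *ᵥ v) := by rw [dotProduct_mulVec]
      _ = (S *ᵥ v) ⬝ᵥ (S *ᵥ v) := by rw [← mulVec_transpose, hSherm]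
  -- Ax ⬝ᵥ v = c ⬝ᵥ (S *ᵥ v)
  have hAxv : ∀ v : Fin n → ℝ, Ax ⬝ᵥ v = c ⬝ᵥ (S *ᵥ v) := by
    intro v
    calc Ax ⬝ᵥ v = Ax ⬝ᵥ (S⁻¹ * S) *ᵥ v := by rw [hinvS, one_mulVec]
      _ = Ax ⬝ᵥ S⁻¹ *ᵥ (S *ᵥ v) := by rw [← mulVec_mulVec]
      _ = c ⬝ᵥ (S *ᵥ v) := by rw [dotProduct_mulVec]
  constructor
  · intro H
    by_cases hc : c = 0
    · have hxb : Ax ⬝ᵥ xb ≤ b := by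
        apply H xb
        rw [hpnorm]
        simp [hδ, eNorm]
      have : eNorm c = 0 := by simp [hc, eNorm]
      rw [this]
      simpa using hxb
    · have hcc : (0:ℝ) < c ⬝ᵥ c := by
        rcases lt_or_eq_of_le (dot_self_nonneg c) with h | h
        · exact h
        · exact absurd ((dotProduct_self_eq_zero).mp h.symm) hc
      have hnc : 0 < eNorm c := Real.sqrt_pos.2 hcc
      set t := δ / eNorm c with htdef
      have ht : 0 ≤ t := div_nonneg hδ hnc.le
      have key := H (xb + t • (S⁻¹ *ᵥ c))
      have hsub : xb + t • (S⁻¹ *ᵥ c) - xb = t • (S⁻¹ *ᵥ c) := by abel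
      have hSvc : S *ᵥ (t • (S⁻¹ *ᵥ c)) = t • c := by
        rw [mulVec_smul, mulVec_mulVec, hSinv, one_mulVec]
      have hpn : pNorm P (xb + t • (S⁻¹ *ᵥ c) - xb) = δ := by
        rw [hsub, hpnorm, hSvc]
        unfold eNorm
        rw [smul_dotProduct, dotProduct_smul, smul_eq_mul, smul_eq_mul, ← mul_assoc,
          Real.sqrt_mul (mul_self_nonneg t), Real.sqrt_mul_self ht]
        have : Real.sqrt (c ⬝ᵥ c) = eNorm c := rfl
        rw [this, htdef, div_mul_cancel₀ _ hnc.ne']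
      have hAxx : Ax ⬝ᵥ (xb + t • (S⁻¹ *ᵥ c)) = Ax ⬝ᵥ xb + eNorm c * δ := by
        rw [dotProduct_add, hAxv (t • (S⁻¹ *ᵥ c)), hSvc, dotProduct_smul, smul_eq_mul,
          htdef]
        congr 1
        rw [← eNorm_mul_self c]
        field_simp
      have := key (le_of_eq hpn)
      rw [hAxx] at this
      linarith
  · intro H x hx
    have h1 : Ax ⬝ᵥ x = Ax ⬝ᵥ xb + c ⬝ᵥ (S *ᵥ (x - xb)) := by
      rw [← hAxv (x - xb), dotProduct_sub]
      ring
    have h2 : c ⬝ᵥ (S *ᵥ (x - xb)) ≤ eNorm c * δ := by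
      calc c ⬝ᵥ (S *ᵥ (x - xb)) ≤ eNorm c * eNorm (S *ᵥ (x - xb)) := cauchy_schwarz _ _
        _ ≤ eNorm c * δ := by
            apply mul_le_mul_of_nonneg_left _ (eNorm_nonneg c)
            rw [← hpnorm]; exact hx
    linarith
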